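/- Let λ_1,…,λ_d ≥ 0 be fixed nonnegative reals, let n ≥ 1, m ≥ 1, and let A > 0, σ² > 0. Define E(α) = Σ_{k=1}^d (σ² λ_k + n² α² A) / (λ_k + n m α)² for α > 0. Then the derivative of E with respect to α equals 2n(nαA − mσ²) · Σ_{k=1}^d λ_k / (λ_k + nmα)³; in particular, if not all λ_k are zero, E has a unique critical point at α* = mσ²/(nA), which is a global minimum on (0,∞). -/

import Mathlib

open Finset

/-- Derivative of the transfer-learning test error in the hyperparameter `α`,
and the resulting unique critical point / global minimum at `α* = mσ²/(nA)`. -/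
theorem stmt_4 {d n m : ℕ} (hn : 1 ≤ n) (hm : 1 ≤ m)
    (lam : Fin d → ℝ) (hlam : ∀ k, 0 ≤ lam k)
    (A σ2 : ℝ) (hA : 0 < A) (hσ : 0 < σ2)
    (E : ℝ → ℝ)
    (hE : ∀ α, E α = ∑ k, (σ2 * lam k + (n : ℝ) ^ 2 * α ^ 2 * A) /
      (lam k + (n : ℝ) * (m : ℝ) * α) ^ 2) :
    (∀ α : ℝ, 0 < α → HasDerivAt E
        (2 * (n : ℝ) * ((n : ℝ) * α * A - (m : ℝ) * σ2) *
          ∑ k, lam k / (lam k + (n : ℝ) * (m : ℝ) * α) ^ 3) α) ∧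
    ((∃ k, lam k ≠ 0) →
      (∀ α : ℝ, 0 < α → E ((m : ℝ) * σ2 / ((n : ℝ) * A)) ≤ E α) ∧
      (∀ α : ℝ, 0 < α →
        (2 * (n : ℝ) * ((n : ℝ) * α * A - (m : ℝ) * σ2) *
            ∑ k, lam k / (lam k + (n : ℝ) * (m : ℝ) * α) ^ 3 = 0
          ↔ α = (m : ℝ) * σ2 / ((n : ℝ) * A)))) := by
  have hn' : (0:ℝ) < n := by exact_mod_cast hn
  have hm' : (0:ℝ) < m := by exact_mod_cast hm
  have hnm : (0:ℝ) < (n:ℝ) * m := by positivity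
  have hEfun : E = fun α => ∑ k, (σ2 * lam k + (n : ℝ) ^ 2 * α ^ 2 * A) /
      (lam k + (n : ℝ) * (m : ℝ) * α) ^ 2 := funext hE
  subst hEfun
  have hden : ∀ (α : ℝ), 0 < α → ∀ k : Fin d, 0 < lam k + (n:ℝ) * m * α := by
    intro α hα k
    have := hlam k
    nlinarith
  constructor
  · intro α hα
    have key : ∀ k : Fin d, HasDerivAt
        (fun α : ℝ => (σ2 * lam k + (n : ℝ) ^ 2 * α ^ 2 * A) /
          (lam k + (n : ℝ) * (m : ℝ) * α) ^ 2)
        (2 * (n : ℝ) * ((n : ℝ) * α * A - (m : ℝ) * σ2) *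
          (lam k / (lam k + (n : ℝ) * (m : ℝ) * α) ^ 3)) α := by
      intro k
      have hd := hden α hα k
      have h1 : HasDerivAt (fun α : ℝ => σ2 * lam k + (n : ℝ) ^ 2 * α ^ 2 * A)
          ((n:ℝ)^2 * (2*α) * A) α := by
        have := (((hasDerivAt_pow 2 α).const_mul ((n:ℝ)^2)).mul_const A).const_add
          (σ2 * lam k)
        refine this.congr_deriv ?_
        ring
      have h2 : HasDerivAt (fun α : ℝ => (lam k + (n : ℝ) * (m : ℝ) * α) ^ 2)
          (2 * (lam k + (n:ℝ) * m * α) * ((n:ℝ)*m)) α := by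
        have hl : HasDerivAt (fun α : ℝ => lam k + (n:ℝ) * m * α) ((n:ℝ)*m) α := by
          simpa using ((hasDerivAt_id α).const_mul ((n:ℝ)*m)).const_add (lam k)
        have := hl.pow 2
        refine this.congr_deriv ?_
        ring
      have := h1.div h2 (by positivity)
      refine this.congr_deriv ?_
      field_simp
      ring
    have := HasDerivAt.fun_sum (u := (Finset.univ : Finset (Fin d))) (fun k _ => key k)
    rwa [← Finset.mul_sum] at this
  · intro ⟨k0, hk0⟩
    constructor
    · intro α hα
      have hb : (0:ℝ) < (m:ℝ) * σ2 / ((n:ℝ) * A) := by positivity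
      apply Finset.sum_le_sum
      intro k _
      have hd1 := hden _ hb k
      have hd2 := hden _ hα k
      rw [div_le_div_iff₀ (by positivity) (by positivity)]
      have hl := hlam k
      set b := (m:ℝ) * σ2 / ((n:ℝ) * A) with hbdef
      have hbeq : (n:ℝ) * A * b = m * σ2 := by
        rw [hbdef]; field_simp
      have hD : (σ2 * lam k + (n:ℝ)^2 * α^2 * A) * (lam k + (n:ℝ)*m*b)^2 -
          (σ2 * lam k + (n:ℝ)^2 * b^2 * A) * (lam k + (n:ℝ)*m*α)^2 =
          (n:ℝ)^2 * A * lam k * (α - b)^2 * (lam k + (n:ℝ)*m*b) := by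
        linear_combination ((n:ℝ) * lam k * (α - b) * (2 * lam k + (n:ℝ)*m*(α+b))) * hbeq
      have hpos : 0 ≤ (n:ℝ)^2 * A * lam k * (α - b)^2 * (lam k + (n:ℝ)*m*b) := by positivity
      linarith
    · intro α hα
      have hS : 0 < ∑ k, lam k / (lam k + (n : ℝ) * (m : ℝ) * α) ^ 3 := by
        apply Finset.sum_pos'
        · intro k _
          have := hden α hα k
          have := hlam k
          positivity
        · refine ⟨k0, Finset.mem_univ _, ?_⟩
          have h1 := hden α hα k0
          have h2 := (hlam k0).lt_of_ne (Ne.symm hk0)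
          positivity
      constructor
      · intro h
        rcases mul_eq_zero.1 h with h | h
        · rcases mul_eq_zero.1 h with h | h
          · exact absurd h (by positivity : (0:ℝ) < 2 * (n:ℝ)).ne'
          · have : (n:ℝ) * α * A = m * σ2 := by linarith
            field_simp
            linarith [this]
            
        · exact absurd h hS.ne'
      · intro h
        subst h
        have : (n:ℝ) * ((m:ℝ) * σ2 / ((n:ℝ) * A)) * A - (m:ℝ) * σ2 = 0 := by
          field_simp
          ring
        rw [this]
        ring
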